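/- Let W = F_2^{2^k} and integers 0 < l+1 < k. There exist linearly independent vectors w_0, ..., w_l ∈ W such that for every proper subset A ⊊ {w_0, ..., w_l} the coordinatewise product satisfies |∏A| = 2^{k−|A|}, while |w_0 * ⋯ * w_l| = 2^{k−l−2}. -/

import Mathlib

/-- Hamming weight of a vector in `F_2^n`. -/
def wt {n : ℕ} (v : Fin n → ZMod 2) : ℕ :=
  (Finset.univ.filter fun i => v i = 1).card

/- Auxiliary lemmas and definitions -/

lemma zmod2_mul_eq_one : ∀ a b : ZMod 2, a * b = 1 ↔ a = 1 ∧ b = 1 := by decide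

lemma zmod2_key : ∀ a b c : ZMod 2, a + ((a + (b + c)) + c) = b := by decide

lemma cube3 : (Finset.univ.filter fun z : Fin 3 → ZMod 2 =>
    z 1 * z 2 + z 0 * (z 1 + z 2) = 1).card = 4 := by decide

lemma prod_eq_one_iff' {ι : Type*} (A : Finset ι) (f : ι → ZMod 2) :
    (∏ i ∈ A, f i = 1) ↔ ∀ i ∈ A, f i = 1 := by
  classical
  induction A using Finset.induction with
  | empty => simp
  | @insert a s hnot ih =>
      rw [Finset.prod_insert hnot, zmod2_mul_eq_one, ih]
      simp [Finset.forall_mem_insert]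

lemma card_filter_iff {α : Type*} [Fintype α] (p q : α → Prop)
    {instp : DecidablePred p} {instq : DecidablePred q} (H : ∀ x, p x ↔ q x) :
    (@Finset.filter _ p instp Finset.univ).card
      = (@Finset.filter _ q instq Finset.univ).card := by
  rw [← Fintype.card_subtype, ← Fintype.card_subtype]
  exact Fintype.card_congr (Equiv.subtypeEquivRight H)

lemma card_filter_equiv {α β : Type*} [Fintype α] [Fintype β] (e : β ≃ α) (P : α → Prop)
    {instP : DecidablePred P} {instQ : DecidablePred fun b => P (e b)} :
    (@Finset.filter _ (fun b => P (e b)) instQ Finset.univ).card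
      = (@Finset.filter _ P instP Finset.univ).card := by
  rw [← Fintype.card_subtype, ← Fintype.card_subtype]
  exact Fintype.card_congr (e.subtypeEquiv fun b => Iff.rfl)

lemma lemA {ι : Type*} [Fintype ι] [DecidableEq ι] (S : Finset ι)
    {inst : DecidablePred fun g : ι → ZMod 2 => ∀ i ∈ S, g i = 1} :
    (@Finset.filter _ (fun g : ι → ZMod 2 => ∀ i ∈ S, g i = 1) inst Finset.univ).card
      = 2 ^ (Fintype.card ι - S.card) := by
  classical
  rw [← Fintype.card_subtype]
  have e : {g : ι → ZMod 2 // ∀ i ∈ S, g i = 1} ≃ ({i // i ∉ S} → ZMod 2) :=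
    { toFun := fun g i => g.1 i.1
      invFun := fun y => ⟨fun i => if h : i ∈ S then 1 else y ⟨i, h⟩,
        fun i hi => dif_pos hi⟩
      left_inv := by
        rintro ⟨g, hg⟩
        ext i
        by_cases hi : i ∈ S
        · simp [dif_pos hi, hg i hi]
        · simp [dif_neg hi]
      right_inv := by
        intro y
        funext i
        simp [dif_neg i.2] }
  rw [Fintype.card_congr e, Fintype.card_fun, ZMod.card]
  congr 1
  rw [Fintype.card_subtype_compl]
  simp [Fintype.card_subtype]

lemma rect {X Y : Type*} [Fintype X] [Fintype Y] [DecidableEq X] [DecidableEq Y]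
    (P : X → Prop) (Q : Y → Prop) [DecidablePred P] [DecidablePred Q] :
    (Finset.univ.filter fun z : X × Y => P z.1 ∧ Q z.2).card
      = (Finset.univ.filter P).card * (Finset.univ.filter Q).card := by
  rw [← Finset.univ_product_univ, Finset.filter_product, Finset.card_product]

def embF (k l : ℕ) (h : l + 1 < k) : Fin (l + 1) ↪ Fin k :=
  ⟨fun i => ⟨i, by omega⟩, fun a b hab => by
    apply Fin.ext
    simpa [Fin.ext_iff] using hab⟩

def clF (k l : ℕ) (h : l + 1 < k) : Fin l ↪ Fin k :=
  ⟨fun j => ⟨j, by omega⟩, fun a b hab => by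
    apply Fin.ext
    simpa [Fin.ext_iff] using hab⟩

def ilD (k l : ℕ) (h : l + 1 < k) : Fin k := ⟨l, by omega⟩
def il1D (k l : ℕ) (h : l + 1 < k) : Fin k := ⟨l + 1, h⟩

def sD (k l : ℕ) (h : l + 1 < k) (g : Fin k → ZMod 2) : ZMod 2 :=
  (l : ZMod 2) + ∑ j : Fin l, g (clF k l h j)

def WD (k l : ℕ) (h : l + 1 < k) : Fin (l + 1) → (Fin k → ZMod 2) → ZMod 2 :=
  fun i g =>
    if (i : ℕ) < l then g (embF k l h i)
    else g (ilD k l h) * g (il1D k l h) + sD k l h g * (g (ilD k l h) + g (il1D k l h))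

lemma WD_lt (k l : ℕ) (h : l + 1 < k) (i : Fin (l + 1)) (hi : (i : ℕ) < l)
    (g : Fin k → ZMod 2) : WD k l h i g = g (embF k l h i) := if_pos hi

lemma WD_last (k l : ℕ) (h : l + 1 < k) (g : Fin k → ZMod 2) :
    WD k l h (Fin.last l) g =
      g (ilD k l h) * g (il1D k l h) + sD k l h g * (g (ilD k l h) + g (il1D k l h)) :=
  if_neg (by simp)

noncomputable def eD (k : ℕ) : (Fin k → ZMod 2) ≃ Fin (2 ^ k) :=
  Fintype.equivFinOfCardEq (by simp)

lemma count_key (k l : ℕ) (h : l + 1 < k) (A : Finset (Fin (l + 1))) :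
    (Finset.univ.filter fun g : Fin k → ZMod 2 => ∀ i ∈ A, WD k l h i g = 1).card
      = if A = Finset.univ then 2 ^ (k - l - 2) else 2 ^ (k - A.card) := by
  classical
  by_cases hAu : A = Finset.univ
  · -- full case
    subst hAu
    rw [if_pos rfl]
    set Sfull : Finset (Fin k) :=
      insert (ilD k l h) (insert (il1D k l h)
        ((Finset.univ : Finset (Fin l)).map (clF k l h))) with hSfull
    have hmem_cl : ∀ j : Fin l, clF k l h j ∈ Sfull := by
      intro j
      simp only [hSfull, Finset.mem_insert, Finset.mem_map, Finset.mem_univ, true_and]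
      right; right; exact ⟨j, rfl⟩
    have hsval : ∀ g : Fin k → ZMod 2, (∀ j : Fin l, g (clF k l h j) = 1) →
        sD k l h g = 0 := by
      intro g hg
      unfold sD
      rw [Finset.sum_congr rfl fun j _ => hg j]
      simp [Finset.card_univ]
      have h2 : ∀ a : ZMod 2, a + a = 0 := by decide
      exact h2 _
    have hiff : ∀ g : Fin k → ZMod 2,
        (∀ i ∈ (Finset.univ : Finset (Fin (l+1))), WD k l h i g = 1)
          ↔ (∀ i' ∈ Sfull, g i' = 1) := by
      intro g
      constructor
      · intro H i' hi'
        have hcoords : ∀ j : Fin l, g (clF k l h j) = 1 := by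
          intro j
          have hj : ((⟨(j : ℕ), by omega⟩ : Fin (l+1)) : ℕ) < l := j.isLt
          have := H ⟨(j : ℕ), by omega⟩ (Finset.mem_univ _)
          rw [WD_lt k l h _ hj g] at this
          exact this
        have hlastv := H (Fin.last l) (Finset.mem_univ _)
        rw [WD_last, hsval g hcoords, zero_mul, add_zero, zmod2_mul_eq_one] at hlastv
        simp only [hSfull, Finset.mem_insert, Finset.mem_map, Finset.mem_univ, true_and]
          at hi'
        rcases hi' with rfl | rfl | ⟨j, rfl⟩
        · exact hlastv.1
        · exact hlastv.2
        · exact hcoords j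
      · intro K i _
        by_cases hi : (i : ℕ) < l
        · rw [WD_lt k l h i hi g]
          exact K _ (hmem_cl ⟨i, hi⟩)
        · have hieq : i = Fin.last l := by
            apply Fin.ext
            have := i.isLt
            simp only [Fin.val_last]
            omega
          subst hieq
          rw [WD_last]
          have h1 : g (ilD k l h) = 1 := K _ (by simp [hSfull])
          have h2 : g (il1D k l h) = 1 := K _ (by simp [hSfull])
          have hcoords : ∀ j : Fin l, g (clF k l h j) = 1 := fun j => K _ (hmem_cl j)
          rw [h1, h2, hsval g hcoords]
          decide
    rw [card_filter_iff _ _ hiff, lemA]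
    have hcard : Sfull.card = l + 2 := by
      rw [hSfull, Finset.card_insert_of_notMem, Finset.card_insert_of_notMem]
      · simp
      · simp only [Finset.mem_map, Finset.mem_univ, true_and]
        rintro ⟨j, hj⟩
        have := congrArg Fin.val hj
        simp [clF, il1D, DFunLike.coe] at this
        omega
      · simp only [Finset.mem_insert, Finset.mem_map, Finset.mem_univ, true_and]
        rintro (hj | ⟨j, hj⟩)
        · have := congrArg Fin.val hj; simp [ilD, il1D] at this
        · have := congrArg Fin.val hj; simp [clF, ilD, DFunLike.coe] at this; omega
    rw [hcard, Fintype.card_fin, show k - (l + 2) = k - l - 2 from by omega]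
    infer_instance
  · rw [if_neg hAu]
    by_cases hlA : Fin.last l ∈ A
    · -- case 2
      obtain ⟨j0, hj0A⟩ : ∃ j0, j0 ∉ A := by
        by_contra hcon
        push_neg at hcon
        exact hAu (Finset.eq_univ_iff_forall.mpr hcon)
      have hj0last : j0 ≠ Fin.last l := fun hh => hj0A (hh ▸ hlA)
      have hj0l : (j0 : ℕ) < l := by
        have h1 := j0.isLt
        have h2 : (j0 : ℕ) ≠ l := fun hv => hj0last (Fin.ext (by simpa using hv))
        omega
      set B := A.erase (Fin.last l) with hB
      have hBlt : ∀ i ∈ B, (i : ℕ) < l := by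
        intro i hi
        obtain ⟨hne, hiA⟩ := Finset.mem_erase.mp hi
        have h1 := i.isLt
        have h2 : (i : ℕ) ≠ l := fun hv => hne (Fin.ext (by simpa using hv))
        omega
      have hj0B : j0 ∉ B := fun hh => hj0A (Finset.mem_of_mem_erase hh)
      set S : Finset (Fin k) := B.map (embF k l h) with hS
      set tj0 : Fin k := embF k l h j0 with htj0
      have hd1 : tj0 ≠ ilD k l h := by
        intro hh
        have := congrArg Fin.val hh
        simp [htj0, embF, ilD, DFunLike.coe] at this
        omega
      have hd2 : tj0 ≠ il1D k l h := by
        intro hh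
        have := congrArg Fin.val hh
        simp [htj0, embF, il1D, DFunLike.coe] at this
        omega
      have hd3 : ilD k l h ≠ il1D k l h := by
        intro hh
        have := congrArg Fin.val hh
        simp [ilD, il1D] at this
      have hSd : ∀ i' ∈ S, i' ≠ tj0 ∧ i' ≠ ilD k l h ∧ i' ≠ il1D k l h := by
        intro i' hi'
        obtain ⟨i, hiB, rfl⟩ := Finset.mem_map.mp hi'
        have hivl : (i : ℕ) < l := hBlt i hiB
        refine ⟨?_, ?_, ?_⟩
        · intro hh
          exact hj0B ((embF k l h).injective hh ▸ hiB)
        · intro hh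
          have := congrArg Fin.val hh
          simp [embF, ilD, DFunLike.coe] at this
          omega
        · intro hh
          have := congrArg Fin.val hh
          simp [embF, il1D, DFunLike.coe] at this
          omega
      set Φ : (Fin k → ZMod 2) → (Fin k → ZMod 2) :=
        fun g => Function.update g tj0 (sD k l h g) with hΦ
      have hclj0 : clF k l h ⟨(j0 : ℕ), hj0l⟩ = tj0 := rfl
      have hsum : ∀ g : Fin k → ZMod 2, sD k l h g
          = (l : ZMod 2) + (g tj0
              + ∑ j ∈ Finset.univ.erase (⟨(j0 : ℕ), hj0l⟩ : Fin l), g (clF k l h j)) := by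
        intro g
        unfold sD
        rw [← Finset.add_sum_erase _ _ (Finset.mem_univ (⟨(j0 : ℕ), hj0l⟩ : Fin l)), hclj0]
      have hsPhi : ∀ g, sD k l h (Φ g) = g tj0 := by
        intro g
        rw [hsum (Φ g)]
        have h1 : (Φ g) tj0 = sD k l h g := Function.update_self _ _ _
        have h2 : ∀ j ∈ Finset.univ.erase (⟨(j0 : ℕ), hj0l⟩ : Fin l),
            (Φ g) (clF k l h j) = g (clF k l h j) := by
          intro j hj
          have hne : clF k l h j ≠ tj0 := by
            intro hh
            apply (Finset.mem_erase.mp hj).1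
            have := congrArg Fin.val hh
            simp [clF, htj0, embF] at this
            exact Fin.ext this
          exact Function.update_of_ne hne _ _
        rw [Finset.sum_congr rfl h2, h1, hsum g]
        exact zmod2_key _ _ _
      have hinv : Function.Involutive Φ := by
        intro g
        show Function.update (Φ g) tj0 (sD k l h (Φ g)) = g
        rw [hsPhi g, hΦ, Function.update_idem]
        exact Function.update_eq_self _ _
      set ΦE : Equiv.Perm (Fin k → ZMod 2) := Function.Involutive.toPerm Φ hinv with hΦE
      have hCiff : ∀ g : Fin k → ZMod 2, (∀ i ∈ A, WD k l h i g = 1) ↔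
          ((∀ i' ∈ S, g i' = 1) ∧
            (g (ilD k l h) * g (il1D k l h)
              + sD k l h g * (g (ilD k l h) + g (il1D k l h)) = 1)) := by
        intro g
        rw [← Finset.insert_erase hlA, Finset.forall_mem_insert, ← hB, WD_last,
          hS, Finset.forall_mem_map]
        constructor
        · rintro ⟨h1, h2⟩
          exact ⟨fun i hi => by rw [← WD_lt k l h i (hBlt i hi) g]; exact h2 i hi, h1⟩
        · rintro ⟨h1, h2⟩
          exact ⟨h2, fun i hi => by rw [WD_lt k l h i (hBlt i hi) g]; exact h1 i hi⟩
      have hC2iff : ∀ g : Fin k → ZMod 2,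
          (∀ i ∈ A, WD k l h i (ΦE g) = 1) ↔
          ((∀ i' ∈ S, g i' = 1) ∧
            (g (ilD k l h) * g (il1D k l h) + g tj0 * (g (ilD k l h) + g (il1D k l h)) = 1)) := by
        intro g
        rw [show ΦE g = Φ g from rfl, hCiff (Φ g)]
        have e1 : (Φ g) (ilD k l h) = g (ilD k l h) := Function.update_of_ne (Ne.symm hd1) _ _
        have e2 : (Φ g) (il1D k l h) = g (il1D k l h) := Function.update_of_ne (Ne.symm hd2) _ _
        have e3 : ∀ i' ∈ S, (Φ g) i' = g i' :=
          fun i' hi' => Function.update_of_ne (hSd i' hi').1 _ _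
        rw [hsPhi g, e1, e2]
        constructor
        · rintro ⟨h1, h2⟩
          exact ⟨fun i' hi' => by rw [← e3 i' hi']; exact h1 i' hi', h2⟩
        · rintro ⟨h1, h2⟩
          exact ⟨fun i' hi' => by rw [e3 i' hi']; exact h1 i' hi', h2⟩
      -- step 1 : transport along the involution
      have step1a : (Finset.univ.filter fun g : Fin k → ZMod 2 =>
            (fun g' : Fin k → ZMod 2 => ∀ i ∈ A, WD k l h i g' = 1) (ΦE g)).card
          = (Finset.univ.filter fun g : Fin k → ZMod 2 => ∀ i ∈ A, WD k l h i g = 1).card :=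
        card_filter_equiv ΦE (fun g' : Fin k → ZMod 2 => ∀ i ∈ A, WD k l h i g' = 1)
      have step1b : (Finset.univ.filter fun g : Fin k → ZMod 2 =>
            (fun g' : Fin k → ZMod 2 => ∀ i ∈ A, WD k l h i g' = 1) (ΦE g)).card
          = (Finset.univ.filter fun g : Fin k → ZMod 2 =>
              (∀ i' ∈ S, g i' = 1) ∧
              (g (ilD k l h) * g (il1D k l h)
                + g tj0 * (g (ilD k l h) + g (il1D k l h)) = 1)).card :=
        card_filter_iff _ _ hC2iff
      rw [step1a.symm.trans step1b]
      -- split coordinates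
      set T : Finset (Fin k) := {tj0, ilD k l h, il1D k l h} with hT
      have htj0T : tj0 ∈ T := by simp [hT]
      have hilT : ilD k l h ∈ T := by simp [hT]
      have hil1T : il1D k l h ∈ T := by simp [hT]
      have hSnT : ∀ i' ∈ S, ¬ i' ∈ T := by
        intro i' hi' hmem
        obtain ⟨n1, n2, n3⟩ := hSd i' hi'
        simp only [hT, Finset.mem_insert, Finset.mem_singleton] at hmem
        rcases hmem with hh | hh | hh
        exacts [n1 hh, n2 hh, n3 hh]
      set E := Equiv.piEquivPiSubtypeProd (fun i : Fin k => i ∈ T) (fun _ => ZMod 2) with hE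
      have hv : ∀ (z : ({x : Fin k // x ∈ T} → ZMod 2) × ({x : Fin k // ¬ x ∈ T} → ZMod 2))
          (i : Fin k) (hi : i ∈ T), E.symm z i = z.1 ⟨i, hi⟩ := by
        intro z i hi
        rw [hE, Equiv.piEquivPiSubtypeProd_symm_apply, dif_pos hi]
      have hv' : ∀ (z : ({x : Fin k // x ∈ T} → ZMod 2) × ({x : Fin k // ¬ x ∈ T} → ZMod 2))
          (i : Fin k) (hi : ¬ i ∈ T), E.symm z i = z.2 ⟨i, hi⟩ := by
        intro z i hi
        rw [hE, Equiv.piEquivPiSubtypeProd_symm_apply, dif_neg hi]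
      have step2a : (Finset.univ.filter fun z :
            ({x : Fin k // x ∈ T} → ZMod 2) × ({x : Fin k // ¬ x ∈ T} → ZMod 2) =>
            (fun g : Fin k → ZMod 2 =>
              (∀ i' ∈ S, g i' = 1) ∧
              (g (ilD k l h) * g (il1D k l h)
                + g tj0 * (g (ilD k l h) + g (il1D k l h)) = 1)) (E.symm z)).card
          = (Finset.univ.filter fun g : Fin k → ZMod 2 =>
              (∀ i' ∈ S, g i' = 1) ∧
              (g (ilD k l h) * g (il1D k l h)
                + g tj0 * (g (ilD k l h) + g (il1D k l h)) = 1)).card :=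
        card_filter_equiv E.symm (fun g : Fin k → ZMod 2 =>
              (∀ i' ∈ S, g i' = 1) ∧
              (g (ilD k l h) * g (il1D k l h)
                + g tj0 * (g (ilD k l h) + g (il1D k l h)) = 1))
      have step2b : (Finset.univ.filter fun z :
            ({x : Fin k // x ∈ T} → ZMod 2) × ({x : Fin k // ¬ x ∈ T} → ZMod 2) =>
            (fun g : Fin k → ZMod 2 =>
              (∀ i' ∈ S, g i' = 1) ∧
              (g (ilD k l h) * g (il1D k l h)
                + g tj0 * (g (ilD k l h) + g (il1D k l h)) = 1)) (E.symm z)).card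
          = (Finset.univ.filter fun z :
            ({x : Fin k // x ∈ T} → ZMod 2) × ({x : Fin k // ¬ x ∈ T} → ZMod 2) =>
              (z.1 ⟨ilD k l h, hilT⟩ * z.1 ⟨il1D k l h, hil1T⟩
                + z.1 ⟨tj0, htj0T⟩ * (z.1 ⟨ilD k l h, hilT⟩ + z.1 ⟨il1D k l h, hil1T⟩) = 1) ∧
              (∀ j ∈ S.subtype (fun i => ¬ i ∈ T), z.2 j = 1)).card := by
        apply card_filter_iff
        intro z
        dsimp only
        constructor
        · rintro ⟨h1, h2⟩
          refine ⟨?_, ?_⟩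
          · rw [← hv z _ hilT, ← hv z _ hil1T, ← hv z _ htj0T]
            exact h2
          · intro j hj
            have hjS : (j : Fin k) ∈ S := Finset.mem_subtype.mp hj
            have h3 := h1 _ hjS
            rwa [hv' z _ j.2] at h3
        · rintro ⟨h1, h2⟩
          refine ⟨?_, ?_⟩
          · intro i' hi'
            rw [hv' z _ (hSnT i' hi')]
            exact h2 ⟨i', hSnT i' hi'⟩ (Finset.mem_subtype.mpr hi')
          · rw [hv z _ hilT, hv z _ hil1T, hv z _ htj0T]
            exact h1
      rw [step2a.symm.trans step2b]
      have step3 : (Finset.univ.filter fun z :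
            ({x : Fin k // x ∈ T} → ZMod 2) × ({x : Fin k // ¬ x ∈ T} → ZMod 2) =>
              (z.1 ⟨ilD k l h, hilT⟩ * z.1 ⟨il1D k l h, hil1T⟩
                + z.1 ⟨tj0, htj0T⟩ * (z.1 ⟨ilD k l h, hilT⟩ + z.1 ⟨il1D k l h, hil1T⟩) = 1) ∧
              (∀ j ∈ S.subtype (fun i => ¬ i ∈ T), z.2 j = 1)).card
          = (Finset.univ.filter fun x : {x : Fin k // x ∈ T} → ZMod 2 =>
              x ⟨ilD k l h, hilT⟩ * x ⟨il1D k l h, hil1T⟩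
                + x ⟨tj0, htj0T⟩ * (x ⟨ilD k l h, hilT⟩ + x ⟨il1D k l h, hil1T⟩) = 1).card
            * (Finset.univ.filter fun y : {x : Fin k // ¬ x ∈ T} → ZMod 2 =>
                ∀ j ∈ S.subtype (fun i => ¬ i ∈ T), y j = 1).card :=
        rect (fun x : {x : Fin k // x ∈ T} → ZMod 2 =>
              x ⟨ilD k l h, hilT⟩ * x ⟨il1D k l h, hil1T⟩
                + x ⟨tj0, htj0T⟩ * (x ⟨ilD k l h, hilT⟩ + x ⟨il1D k l h, hil1T⟩) = 1)
          (fun y : {x : Fin k // ¬ x ∈ T} → ZMod 2 =>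
                ∀ j ∈ S.subtype (fun i => ¬ i ∈ T), y j = 1)
      rw [step3]
      -- count the cube part
      have hPq4 : (Finset.univ.filter fun x : {x : Fin k // x ∈ T} → ZMod 2 =>
              x ⟨ilD k l h, hilT⟩ * x ⟨il1D k l h, hil1T⟩
                + x ⟨tj0, htj0T⟩ * (x ⟨ilD k l h, hilT⟩ + x ⟨il1D k l h, hil1T⟩) = 1).card = 4 := by
        rw [← cube3]
        refine Finset.card_bij'
          (fun x _ => ![x ⟨tj0, htj0T⟩, x ⟨ilD k l h, hilT⟩, x ⟨il1D k l h, hil1T⟩])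
          (fun z _ => fun t => if t.1 = tj0 then z 0 else if t.1 = ilD k l h then z 1 else z 2)
          ?_ ?_ ?_ ?_
        · intro x hx
          simp only [Finset.mem_filter, Finset.mem_univ, true_and] at hx ⊢
          simpa using hx
        · intro z hz
          simp only [Finset.mem_filter, Finset.mem_univ, true_and] at hz ⊢
          simpa [Ne.symm hd1, Ne.symm hd2, Ne.symm hd3] using hz
        · intro x hx
          funext t
          obtain ⟨v, hv2⟩ := t
          simp only [hT, Finset.mem_insert, Finset.mem_singleton] at hv2
          rcases hv2 with rfl | rfl | rfl
          · simp
          · simp [Ne.symm hd1]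
          · simp [Ne.symm hd2, Ne.symm hd3]
        · intro z hz
          funext m
          fin_cases m <;> simp [Ne.symm hd1, Ne.symm hd2, Ne.symm hd3]
      rw [hPq4]
      -- count the free part
      have hTcard : T.card = 3 := by
        rw [hT]
        rw [Finset.card_insert_of_notMem (by simp [hd1, hd2]),
          Finset.card_insert_of_notMem (by simp [hd3]), Finset.card_singleton]
      have hcompl : Fintype.card {x : Fin k // ¬ x ∈ T} = k - 3 := by
        rw [Fintype.card_subtype_compl]
        have h1 : Fintype.card {x : Fin k // x ∈ T} = 3 := by
          rw [Fintype.card_coe, hTcard]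
        rw [h1, Fintype.card_fin]
      have hsub : (S.subtype (fun i => ¬ i ∈ T)).card = A.card - 1 := by
        rw [Finset.card_subtype, Finset.filter_true_of_mem hSnT, hS, Finset.card_map, hB,
          Finset.card_erase_of_mem hlA]
      have hQy : (Finset.univ.filter fun y : {x : Fin k // ¬ x ∈ T} → ZMod 2 =>
                ∀ j ∈ S.subtype (fun i => ¬ i ∈ T), y j = 1).card
          = 2 ^ ((k - 3) - (A.card - 1)) := by
        rw [lemA, hcompl, hsub]
      rw [hQy]
      have hA1 : 1 ≤ A.card := Finset.card_pos.mpr ⟨_, hlA⟩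
      have hAle : A.card < l + 1 := by
        simpa using Finset.card_lt_card (Finset.ssubset_univ_iff.mpr hAu)
      have hexp : 2 + (k - 3 - (A.card - 1)) = k - A.card := by
        clear * - hA1 hAle h
        omega
      rw [show (4 : ℕ) = 2 ^ 2 from rfl, ← pow_add, hexp]
    · -- case 1 : last not in A
      have hval : ∀ i ∈ A, (i : ℕ) < l := by
        intro i hi
        have h1 : i ≠ Fin.last l := fun hh => hlA (hh ▸ hi)
        have h3 := i.isLt
        have h2 : (i : ℕ) ≠ l := fun hv => h1 (Fin.ext (by simpa using hv))
        omega
      have hiff : ∀ g : Fin k → ZMod 2,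
          (∀ i ∈ A, WD k l h i g = 1) ↔ (∀ i' ∈ A.map (embF k l h), g i' = 1) := by
        intro g
        rw [Finset.forall_mem_map]
        exact forall₂_congr fun i hi => by rw [WD_lt k l h i (hval i hi) g]
      rw [card_filter_iff _ _ hiff, lemA, Finset.card_map, Fintype.card_fin]
      infer_instance

lemma wt_prod (k l : ℕ) (h : l + 1 < k) (A : Finset (Fin (l + 1))) :
    wt (∏ i ∈ A, fun x : Fin (2 ^ k) => WD k l h i ((eD k).symm x))
      = (Finset.univ.filter fun g : Fin k → ZMod 2 => ∀ i ∈ A, WD k l h i g = 1).card := by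
  classical
  unfold wt
  have h1 : ∀ x : Fin (2 ^ k),
      (∏ i ∈ A, fun x : Fin (2 ^ k) => WD k l h i ((eD k).symm x)) x
        = ∏ i ∈ A, WD k l h i ((eD k).symm x) := by
    intro x
    simp [Finset.prod_apply]
  have h2 : (Finset.univ.filter fun x : Fin (2 ^ k) =>
      (∏ i ∈ A, fun x : Fin (2 ^ k) => WD k l h i ((eD k).symm x)) x = 1).card
      = (Finset.univ.filter fun x : Fin (2 ^ k) =>
          (fun g : Fin k → ZMod 2 => ∀ i ∈ A, WD k l h i g = 1) ((eD k).symm x)).card :=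
    card_filter_iff _ _ (fun x => by rw [h1 x]; exact prod_eq_one_iff' A _)
  rw [h2]
  exact card_filter_equiv (eD k).symm (fun g : Fin k → ZMod 2 => ∀ i ∈ A, WD k l h i g = 1)

theorem ckey (k l : ℕ) (h : l + 1 < k) :
    ∃ w : Fin (l + 1) → (Fin (2 ^ k) → ZMod 2),
      LinearIndependent (ZMod 2) w ∧
      (∀ A : Finset (Fin (l + 1)), A ≠ Finset.univ →
        wt (∏ i ∈ A, w i) = 2 ^ (k - A.card)) ∧
      wt (∏ i, w i) = 2 ^ (k - l - 2) := by
  classical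
  refine ⟨fun i x => WD k l h i ((eD k).symm x), ?_, ?_, ?_⟩
  · rw [Fintype.linearIndependent_iff]
    intro c hc i
    have heval : ∀ g : Fin k → ZMod 2, ∑ j : Fin (l + 1), c j * WD k l h j g = 0 := by
      intro g
      have h0 := congrFun hc (eD k g)
      simpa [Finset.sum_apply, Pi.smul_apply, smul_eq_mul] using h0
    by_cases hi : (i : ℕ) < l
    · set g : Fin k → ZMod 2 := fun t => if t = embF k l h i then 1 else 0 with hg
      have hWi : WD k l h i g = 1 := by
        rw [WD_lt k l h i hi g, hg]
        simp
      have hWj : ∀ j : Fin (l + 1), j ≠ i → WD k l h j g = 0 := by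
        intro j hj
        by_cases hjl : (j : ℕ) < l
        · rw [WD_lt k l h j hjl g, hg]
          simp only
          rw [if_neg fun hh => hj ((embF k l h).injective hh)]
        · have hjlast : j = Fin.last l := by
            apply Fin.ext
            have := j.isLt
            simp only [Fin.val_last]
            omega
          subst hjlast
          rw [WD_last]
          have e1 : g (ilD k l h) = 0 := by
            rw [hg]
            simp only
            rw [if_neg]
            intro hh
            have := congrArg Fin.val hh
            simp [ilD, embF, DFunLike.coe] at this
            omega
          have e2 : g (il1D k l h) = 0 := by
            rw [hg]
            simp only
            rw [if_neg]
            intro hh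
            have := congrArg Fin.val hh
            simp [il1D, embF, DFunLike.coe] at this
            omega
          rw [e1, e2]
          simp
      have h3 := heval g
      rw [Fintype.sum_eq_single i (fun j hj => by rw [hWj j hj, mul_zero])] at h3
      rw [hWi, mul_one] at h3
      exact h3
    · have hieq : i = Fin.last l := by
        apply Fin.ext
        have := i.isLt
        simp only [Fin.val_last]
        omega
      subst hieq
      set g : Fin k → ZMod 2 :=
        fun t => if t = ilD k l h ∨ t = il1D k l h then 1 else 0 with hg
      have hWi : WD k l h (Fin.last l) g = 1 := by
        rw [WD_last]
        have e1 : g (ilD k l h) = 1 := by rw [hg]; simp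
        have e2 : g (il1D k l h) = 1 := by rw [hg]; simp
        rw [e1, e2]
        have h11 : (1 : ZMod 2) + 1 = 0 := by decide
        rw [h11, mul_zero, add_zero, one_mul]
      have hWj : ∀ j : Fin (l + 1), j ≠ Fin.last l → WD k l h j g = 0 := by
        intro j hj
        have hjl : (j : ℕ) < l := by
          have h4 := j.isLt
          have h5 : (j : ℕ) ≠ l := fun hv => hj (Fin.ext (by simpa using hv))
          omega
        rw [WD_lt k l h j hjl g, hg]
        simp only
        rw [if_neg]
        rintro (hh | hh)
        · have := congrArg Fin.val hh
          simp [embF, ilD, DFunLike.coe] at this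
          omega
        · have := congrArg Fin.val hh
          simp [embF, il1D, DFunLike.coe] at this
          omega
      have h3 := heval g
      rw [Fintype.sum_eq_single (Fin.last l)
        (fun j hj => by rw [hWj j hj, mul_zero])] at h3
      rw [hWi, mul_one] at h3
      exact h3
  · intro A hA
    exact (wt_prod k l h A).trans (by rw [count_key k l h A, if_neg hA])
  · exact (wt_prod k l h Finset.univ).trans
      (by rw [count_key k l h Finset.univ, if_pos rfl])
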